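/- For all compactly branching WMTS S₁ and S₂, the thorough refinement distance is bounded above by the modal refinement distance: d_t(S₁,S₂) ≤ d_m(S₁,S₂). -/

import Mathlib

open scoped ENNReal

namespace WMTSQuant

/-- A closed extended-integer interval `[lo, hi]` with `lo ∈ ℤ ∪ {-∞}`,
`hi ∈ ℤ ∪ {∞}` and `lo ≤ hi`. -/
structure EInterval where
  lo : EReal
  hi : EReal
  lo_mem : lo = ⊥ ∨ ∃ n : ℤ, lo = ((n : ℝ) : EReal)
  hi_mem : hi = ⊤ ∨ ∃ n : ℤ, hi = ((n : ℝ) : EReal)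
  lo_le_hi : lo ≤ hi

/-- Specification labels 𝕂 = Σ × 𝕀. -/
abbrev SLabel (Act : Type) := Act × EInterval

/-- The refinement order ⊑ on specification labels. -/
def LabelLE {Act : Type} (k k' : SLabel Act) : Prop :=
  k.1 = k'.1 ∧ k'.2.lo ≤ k.2.lo ∧ k.2.hi ≤ k'.2.hi

/-- Implementation labels: singleton integer intervals. -/
def IsImpLabel {Act : Type} (k : SLabel Act) : Prop :=
  ∃ n : ℤ, k.2.lo = ((n : ℝ) : EReal) ∧ k.2.hi = ((n : ℝ) : EReal)

/-- Truncation of an extended real to `[0,∞]`. -/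
noncomputable def erealToNNE (x : EReal) : ℝ≥0∞ :=
  if x = ⊤ then ⊤ else ENNReal.ofReal x.toReal

open Classical in
/-- The label distance d_𝕂. -/
noncomputable def dK {Act : Type} (k ℓ : SLabel Act) : ℝ≥0∞ :=
  if k.1 = ℓ.1 then erealToNNE (max (ℓ.2.lo - k.2.lo) (max (k.2.hi - ℓ.2.hi) 0)) else ⊤

/-- Weighted modal transition systems. -/
structure WMTS (Act : Type) where
  State : Type
  init : State
  may : State → SLabel Act → State → Prop
  must : State → SLabel Act → State → Prop
  must_may : ∀ s k s', must s k s' → ∃ ℓ, LabelLE k ℓ ∧ may s ℓ s'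

variable {Act : Type}

/-- Implementations: `must = may`, all labels singleton integer intervals. -/
def WMTS.IsImplementation (S : WMTS Act) : Prop :=
  (∀ s k s', S.may s k s' ↔ S.must s k s') ∧
    ∀ s k s', S.must s k s' → IsImpLabel k

/-- (Boolean) modal refinement `S₁ ≤ₘ S₂`. -/
def Refines (S₁ S₂ : WMTS Act) : Prop :=
  ∃ R : S₁.State → S₂.State → Prop, R S₁.init S₂.init ∧
    ∀ s₁ s₂, R s₁ s₂ →
      (∀ k₁ t₁, S₁.may s₁ k₁ t₁ →
        ∃ k₂ t₂, S₂.may s₂ k₂ t₂ ∧ LabelLE k₁ k₂ ∧ R t₁ t₂) ∧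
      (∀ k₂ t₂, S₂.must s₂ k₂ t₂ →
        ∃ k₁ t₁, S₁.must s₁ k₁ t₁ ∧ LabelLE k₁ k₂ ∧ R t₁ t₂)

/-- Implementation semantics ⟦S⟧. -/
def Impl (S : WMTS Act) : Set (WMTS Act) :=
  {I | I.IsImplementation ∧ Refines I S}

/-- The endofunction whose least fixed point is the modal refinement distance. -/
noncomputable def dmF (lam : ℝ≥0∞) (S₁ S₂ : WMTS Act) :
    (S₁.State → S₂.State → ℝ≥0∞) →o (S₁.State → S₂.State → ℝ≥0∞) where
  toFun f := fun s₁ s₂ =>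
    max
      (⨆ k₁, ⨆ t₁, ⨆ _ : S₁.may s₁ k₁ t₁,
        ⨅ k₂, ⨅ t₂, ⨅ _ : S₂.may s₂ k₂ t₂, dK k₁ k₂ + lam * f t₁ t₂)
      (⨆ k₂, ⨆ t₂, ⨆ _ : S₂.must s₂ k₂ t₂,
        ⨅ k₁, ⨅ t₁, ⨅ _ : S₁.must s₁ k₁ t₁, dK k₁ k₂ + lam * f t₁ t₂)
  monotone' := by
    intro f g hfg s₁ s₂
    dsimp only
    gcongr with k₁ t₁ h k₂ t₂ h' k₂ t₂ h k₁ t₁ h' <;> exact hfg _ _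

/-- The modal refinement distance between states. -/
noncomputable def dm (lam : ℝ≥0∞) (S₁ S₂ : WMTS Act) :
    S₁.State → S₂.State → ℝ≥0∞ :=
  OrderHom.lfp (dmF lam S₁ S₂)

/-- The modal refinement distance between systems. -/
noncomputable def dmInit (lam : ℝ≥0∞) (S₁ S₂ : WMTS Act) : ℝ≥0∞ :=
  dm lam S₁ S₂ S₁.init S₂.init

/-- The endofunction whose least fixed point is the implementation distance. -/
noncomputable def diF (lam : ℝ≥0∞) (I₁ I₂ : WMTS Act) :
    (I₁.State → I₂.State → ℝ≥0∞) →o (I₁.State → I₂.State → ℝ≥0∞) where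
  toFun f := fun i₁ i₂ =>
    max
      (⨆ k₁, ⨆ j₁, ⨆ _ : I₁.must i₁ k₁ j₁,
        ⨅ k₂, ⨅ j₂, ⨅ _ : I₂.must i₂ k₂ j₂, dK k₁ k₂ + lam * f j₁ j₂)
      (⨆ k₂, ⨆ j₂, ⨆ _ : I₂.must i₂ k₂ j₂,
        ⨅ k₁, ⨅ j₁, ⨅ _ : I₁.must i₁ k₁ j₁, dK k₁ k₂ + lam * f j₁ j₂)
  monotone' := by
    intro f g hfg i₁ i₂
    dsimp only
    gcongr with k₁ t₁ h k₂ t₂ h' k₂ t₂ h k₁ t₁ h' <;> exact hfg _ _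

/-- The implementation distance between states of implementations. -/
noncomputable def di (lam : ℝ≥0∞) (I₁ I₂ : WMTS Act) :
    I₁.State → I₂.State → ℝ≥0∞ :=
  OrderHom.lfp (diF lam I₁ I₂)

/-- The implementation distance between implementations. -/
noncomputable def diInit (lam : ℝ≥0∞) (I₁ I₂ : WMTS Act) : ℝ≥0∞ :=
  di lam I₁ I₂ I₁.init I₂.init

/-- The thorough refinement distance. -/
noncomputable def dt (lam : ℝ≥0∞) (S₁ S₂ : WMTS Act) : ℝ≥0∞ :=
  ⨆ I₁ ∈ Impl S₁, ⨅ I₂ ∈ Impl S₂, diInit lam I₁ I₂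


/-- Pointwise sum of intervals. -/
noncomputable def EInterval.add (I J : EInterval) : EInterval where
  lo := I.lo + J.lo
  hi := I.hi + J.hi
  lo_mem := by
    rcases I.lo_mem with h | ⟨n, h⟩
    · exact Or.inl (by rw [h, EReal.bot_add])
    · rcases J.lo_mem with h' | ⟨m, h'⟩
      · exact Or.inl (by rw [h', EReal.add_bot])
      · exact Or.inr ⟨n + m, by rw [h, h', ← EReal.coe_add]; norm_cast⟩
  hi_mem := by
    rcases I.hi_mem with h | ⟨n, h⟩
    · exact Or.inl (by rw [h, EReal.top_add_of_ne_bot]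
                       rcases J.hi_mem with h' | ⟨m, h'⟩ <;> simp [h'])
    · rcases J.hi_mem with h' | ⟨m, h'⟩
      · exact Or.inl (by rw [h', EReal.add_top_of_ne_bot]; simp [h])
      · exact Or.inr ⟨n + m, by rw [h, h', ← EReal.coe_add]; norm_cast⟩
  lo_le_hi := add_le_add I.lo_le_hi J.lo_le_hi

/-- Widening `I ± δ` of an interval. -/
noncomputable def EInterval.widen (I : EInterval) (δ : ℕ) : EInterval where
  lo := I.lo - ((δ : ℝ) : EReal)
  hi := I.hi + ((δ : ℝ) : EReal)
  lo_mem := by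
    rcases I.lo_mem with h | ⟨n, h⟩
    · exact Or.inl (by rw [h, EReal.bot_sub])
    · exact Or.inr ⟨n - δ, by rw [h, ← EReal.coe_sub]; norm_cast⟩
  hi_mem := by
    rcases I.hi_mem with h | ⟨n, h⟩
    · exact Or.inl (by rw [h, EReal.top_add_of_ne_bot]; exact EReal.coe_ne_bot _)
    · exact Or.inr ⟨n + δ, by rw [h, ← EReal.coe_add]; norm_cast⟩
  lo_le_hi := by
    refine le_trans ?_ (le_trans I.lo_le_hi ?_)
    · rw [sub_eq_add_neg]
      nth_rewrite 2 [show I.lo = I.lo + 0 by rw [add_zero]]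
      refine add_le_add le_rfl ?_
      rw [← EReal.coe_neg, ← EReal.coe_zero, EReal.coe_le_coe_iff]
      simp
    · nth_rewrite 1 [show I.hi = I.hi + 0 by rw [add_zero]]
      refine add_le_add le_rfl ?_
      rw [← EReal.coe_zero, EReal.coe_le_coe_iff]
      simp



/-- Symmetrization of a hemimetric. -/
noncomputable def symDist {α : Type*} (d : α → α → ℝ≥0∞) : α → α → ℝ≥0∞ :=
  fun x y => max (d x y) (d y x)

/-- Product distance. -/
noncomputable def prodDist {α β : Type*} (d : α → α → ℝ≥0∞) (e : β → β → ℝ≥0∞) :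
    α × β → α × β → ℝ≥0∞ :=
  fun p q => d p.1 q.1 + e p.2 q.2

/-- (Sequential) compactness of a set with respect to an `ℝ≥0∞`-valued distance. -/
def CompactIn {α : Type*} (d : α → α → ℝ≥0∞) (A : Set α) : Prop :=
  ∀ u : ℕ → α, (∀ n, u n ∈ A) →
    ∃ x ∈ A, ∃ φ : ℕ → ℕ, StrictMono φ ∧
      Filter.Tendsto (fun n => d x (u (φ n))) Filter.atTop (nhds 0)

/-- Compactly branching WMTS. -/
def CompactlyBranching (lam : ℝ≥0∞) (S : WMTS Act) : Prop :=
  ∀ s : S.State,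
    CompactIn (prodDist (symDist (dm lam S S)) (symDist dK))
      {p : S.State × SLabel Act | S.may s p.2 p.1} ∧
    CompactIn (prodDist (symDist (dm lam S S)) (symDist dK))
      {p : S.State × SLabel Act | S.must s p.2 p.1}

/-- Deterministic WMTS. -/
def Deterministic (S : WMTS Act) : Prop :=
  ∀ (s : S.State) (a : Act) (I₁ I₂ : EInterval) (t₁ t₂ : S.State),
    S.may s (a, I₁) t₁ → S.may s (a, I₂) t₂ → I₁ = I₂ ∧ t₁ = t₂

/-- `S'` is an ε-relaxation of `S`. -/
def Relaxation (lam ε : ℝ≥0∞) (S S' : WMTS Act) : Prop :=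
  Refines S S' ∧ dmInit lam S' S ≤ ε

/-- The ε-extended implementation semantics ⟦S⟧⁺ᵉ. -/
def ImplExt (lam ε : ℝ≥0∞) (S : WMTS Act) : Set (WMTS Act) :=
  {I | I.IsImplementation ∧ dmInit lam I S ≤ ε}

/-- The δ-widening S⁺δ of a WMTS. -/
noncomputable def WMTS.widen (S : WMTS Act) (δ : ℕ) : WMTS Act where
  State := S.State
  init := S.init
  may s k t := ∃ a I, S.may s (a, I) t ∧ k = (a, I.widen δ)
  must s k t := ∃ a I, S.must s (a, I) t ∧ k = (a, I.widen δ)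
  must_may := by
    rintro s k t ⟨a, I, h, rfl⟩
    obtain ⟨ℓ, hle, hmay⟩ := S.must_may _ _ _ h
    refine ⟨(ℓ.1, ℓ.2.widen δ), ⟨hle.1, ?_, ?_⟩, ℓ.1, ℓ.2, hmay, rfl⟩
    · exact EReal.sub_le_sub hle.2.1 le_rfl
    · exact add_le_add hle.2.2 le_rfl

/-- Definedness of label synchronization ⊕. -/
def OplusDefined (k ℓ : SLabel Act) : Prop := k.1 = ℓ.1

/-- Label synchronization ⊕ (adding the intervals). -/
noncomputable def oplus (k ℓ : SLabel Act) : SLabel Act :=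
  (k.1, k.2.add ℓ.2)

/-- Definedness of label quotient ⊖ (equal actions, the difference interval is a
valid extended-integer interval). -/
def OminusDefined (k ℓ : SLabel Act) : Prop :=
  k.1 = ℓ.1 ∧ k.2.lo - ℓ.2.lo ≤ k.2.hi - ℓ.2.hi ∧
    (k.2.lo - ℓ.2.lo = ⊥ ∨ ∃ n : ℤ, k.2.lo - ℓ.2.lo = ((n : ℝ) : EReal)) ∧
    (k.2.hi - ℓ.2.hi = ⊤ ∨ ∃ n : ℤ, k.2.hi - ℓ.2.hi = ((n : ℝ) : EReal))

/-- Label quotient ⊖. -/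
noncomputable def ominus (k ℓ : SLabel Act) (h : OminusDefined k ℓ) : SLabel Act :=
  (k.1, ⟨k.2.lo - ℓ.2.lo, k.2.hi - ℓ.2.hi, h.2.2.1, h.2.2.2, h.2.1⟩)

/-- Structural composition S₁ ∥ S₂ (CSP-style synchronization, adding weights). -/
noncomputable def par (S₁ S₂ : WMTS Act) : WMTS Act where
  State := S₁.State × S₂.State
  init := (S₁.init, S₂.init)
  may p k q := ∃ k₁ k₂, S₁.may p.1 k₁ q.1 ∧ S₂.may p.2 k₂ q.2 ∧
    OplusDefined k₁ k₂ ∧ k = oplus k₁ k₂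
  must p k q := ∃ k₁ k₂, S₁.must p.1 k₁ q.1 ∧ S₂.must p.2 k₂ q.2 ∧
    OplusDefined k₁ k₂ ∧ k = oplus k₁ k₂
  must_may := by
    rintro p k q ⟨k₁, k₂, h₁, h₂, hd, rfl⟩
    obtain ⟨ℓ₁, hle₁, hmay₁⟩ := S₁.must_may _ _ _ h₁
    obtain ⟨ℓ₂, hle₂, hmay₂⟩ := S₂.must_may _ _ _ h₂
    refine ⟨oplus ℓ₁ ℓ₂, ⟨?_, ?_, ?_⟩,
      ℓ₁, ℓ₂, hmay₁, hmay₂, by rw [OplusDefined, ← hle₁.1, ← hle₂.1]; exact hd, rfl⟩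
    · exact hle₁.1
    · exact add_le_add hle₁.2.1 hle₂.2.1
    · exact add_le_add hle₁.2.2 hle₂.2.2

section Quotient

variable (S₁ S₂ : WMTS Act)

/-- May transitions of the (unpruned) quotient; `none` is the universal state u. -/
def qmay : Option (S₁.State × S₂.State) → SLabel Act → Option (S₁.State × S₂.State) → Prop
  | some p, k, some q =>
      (∃ k₁ k₂, ∃ h : OminusDefined k₁ k₂,
        S₁.may p.1 k₁ q.1 ∧ S₂.may p.2 k₂ q.2 ∧ k = ominus k₁ k₂ h) ∨
      (∃ k₁ k₂, ∃ h : OminusDefined k₁ k₂,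
        S₁.must p.1 k₁ q.1 ∧ S₂.must p.2 k₂ q.2 ∧ k = ominus k₁ k₂ h)
  | some p, k, none => ∀ k₂ t₂, S₂.may p.2 k₂ t₂ → ¬ OplusDefined k k₂
  | none, _, none => True
  | none, _, some _ => False

/-- Must transitions of the (unpruned) quotient. -/
def qmust : Option (S₁.State × S₂.State) → SLabel Act → Option (S₁.State × S₂.State) → Prop
  | some p, k, some q =>
      ∃ k₁ k₂, ∃ h : OminusDefined k₁ k₂,
        S₁.must p.1 k₁ q.1 ∧ S₂.must p.2 k₂ q.2 ∧ k = ominus k₁ k₂ h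
  | _, _, _ => False

/-- Inconsistent states of the quotient. -/
def QBad : Option (S₁.State × S₂.State) → Prop
  | some p => ∃ k₁ t₁, S₁.must p.1 k₁ t₁ ∧
      ∀ k₂ t₂, S₂.must p.2 k₂ t₂ → ¬ OminusDefined k₁ k₂
  | none => False

/-- States removed by pruning: those that can reach an inconsistent state via
must transitions (reflexive-transitive closure of `pre`). -/
def QPruned (p : Option (S₁.State × S₂.State)) : Prop :=
  ∃ q, Relation.ReflTransGen (fun x y => ∃ k, qmust S₁ S₂ x k y) p q ∧ QBad S₁ S₂ q

/-- The quotient S₁ ⫽ S₂, defined whenever the initial state survives pruning. -/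
noncomputable def quotient' (h : ¬ QPruned S₁ S₂ (some (S₁.init, S₂.init))) :
    WMTS Act where
  State := {p : Option (S₁.State × S₂.State) // ¬ QPruned S₁ S₂ p}
  init := ⟨some (S₁.init, S₂.init), h⟩
  may p k q := qmay S₁ S₂ p.1 k q.1
  must p k q := qmust S₁ S₂ p.1 k q.1
  must_may := by
    rintro ⟨p, hp⟩ k ⟨q, hq⟩ hmust
    refine ⟨k, ⟨rfl, le_rfl, le_rfl⟩, ?_⟩
    cases p with
    | none => exact hmust.elim
    | some p =>
      cases q with
      | none => exact hmust.elim
      | some q => exact Or.inr hmust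

end Quotient

/-- Formulae of the logic L. -/
inductive Formula (Act : Type) where
  | tt : Formula Act
  | ff : Formula Act
  | diam : SLabel Act → Formula Act → Formula Act
  | box : SLabel Act → Formula Act → Formula Act
  | and : Formula Act → Formula Act → Formula Act
  | or : Formula Act → Formula Act → Formula Act

/-- Disjunction-free formulae. -/
def Formula.DisjFree : Formula Act → Prop
  | .tt => True
  | .ff => True
  | .diam _ φ => φ.DisjFree
  | .box _ φ => φ.DisjFree
  | .and φ ψ => φ.DisjFree ∧ ψ.DisjFree
  | .or _ _ => False

/-- Quantitative semantics ⟦φ⟧ : S → [0,∞] of the logic L. -/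
noncomputable def sem (lam : ℝ≥0∞) (S : WMTS Act) : Formula Act → S.State → ℝ≥0∞
  | .tt, _ => 0
  | .ff, _ => ⊤
  | .and φ ψ, s => max (sem lam S φ s) (sem lam S ψ s)
  | .or φ ψ, s => min (sem lam S φ s) (sem lam S ψ s)
  | .diam ℓ φ, s =>
      ⨅ k, ⨅ t, ⨅ _ : S.must s k t ∧ dK k ℓ ≠ ⊤, dK k ℓ + lam * sem lam S φ t
  | .box ℓ φ, s =>
      ⨆ k, ⨆ t, ⨆ _ : S.may s k t ∧ dK k ℓ ≠ ⊤, dK k ℓ + lam * sem lam S φ t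

/-- ⟦φ⟧S = ⟦φ⟧s⁰. -/
noncomputable def semInit (lam : ℝ≥0∞) (S : WMTS Act) (φ : Formula Act) : ℝ≥0∞ :=
  sem lam S φ S.init


/-! ### Auxiliary lemmas for Statement 6 -/

section AuxErealToNNE

lemma erealToNNE_bot' : erealToNNE (⊥ : EReal) = 0 := by
  simp [erealToNNE]

lemma erealToNNE_top' : erealToNNE (⊤ : EReal) = ⊤ := by
  simp [erealToNNE]

lemma erealToNNE_mono : Monotone erealToNNE := by
  intro x y h
  rcases eq_or_ne y ⊤ with rfl | hy
  · simp [erealToNNE]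
  have hx : x ≠ ⊤ := fun hx => hy (top_le_iff.mp (hx ▸ h))
  rw [erealToNNE, if_neg hx, erealToNNE, if_neg hy]
  rcases eq_or_ne x ⊥ with rfl | hxb
  · simp
  · exact ENNReal.ofReal_le_ofReal (EReal.toReal_le_toReal h hxb hy)

lemma erealToNNE_nonpos {x : EReal} (h : x ≤ 0) : erealToNNE x = 0 := by
  refine le_antisymm ?_ (zero_le)
  have h0 : erealToNNE (0 : EReal) = 0 := by
    simp [erealToNNE]
  exact h0 ▸ erealToNNE_mono h

lemma erealToNNE_max' (x y : EReal) :
    erealToNNE (max x y) = max (erealToNNE x) (erealToNNE y) := by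
  rcases le_total x y with h | h
  · rw [max_eq_right h, max_eq_right (erealToNNE_mono h)]
  · rw [max_eq_left h, max_eq_left (erealToNNE_mono h)]

lemma erealToNNE_add_le (x y : EReal) :
    erealToNNE (x + y) ≤ erealToNNE x + erealToNNE y := by
  rcases eq_or_ne x ⊤ with rfl | hx
  · rw [erealToNNE_top']; exact le_trans le_top (by simp)
  rcases eq_or_ne y ⊤ with rfl | hy
  · rw [erealToNNE_top']; exact le_trans le_top (by simp)
  rcases eq_or_ne x ⊥ with rfl | hxb
  · rw [EReal.bot_add, erealToNNE_bot']; exact zero_le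
  rcases eq_or_ne y ⊥ with rfl | hyb
  · rw [EReal.add_bot, erealToNNE_bot']; exact zero_le
  obtain ⟨a, rfl⟩ : ∃ a : ℝ, x = ((a : ℝ) : EReal) := ⟨x.toReal, (EReal.coe_toReal hx hxb).symm⟩
  obtain ⟨b, rfl⟩ : ∃ b : ℝ, y = ((b : ℝ) : EReal) := ⟨y.toReal, (EReal.coe_toReal hy hyb).symm⟩
  rw [← EReal.coe_add]
  simp only [erealToNNE, EReal.coe_ne_top, if_false, EReal.toReal_coe]
  exact ENNReal.ofReal_add_le

lemma erealToNNE_sub_triangle (x y z : EReal) :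
    erealToNNE (x - z) ≤ erealToNNE (x - y) + erealToNNE (y - z) := by
  rcases eq_or_ne x ⊥ with rfl | hx
  · rw [EReal.bot_sub, erealToNNE_bot']; exact zero_le
  rcases eq_or_ne z ⊤ with rfl | hz
  · rw [EReal.sub_top, erealToNNE_bot']; exact zero_le
  rcases eq_or_ne y ⊥ with rfl | hyb
  · rw [EReal.sub_bot hx, erealToNNE_top']
    exact le_trans le_top (by simp)
  rcases eq_or_ne y ⊤ with rfl | hyt
  · have : (⊤ : EReal) - z = ⊤ := by
      rcases eq_or_ne z ⊥ with rfl | hzb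
      · exact EReal.sub_bot (by simp)
      · obtain ⟨c, rfl⟩ : ∃ c : ℝ, z = ((c : ℝ) : EReal) :=
          ⟨z.toReal, (EReal.coe_toReal hz hzb).symm⟩
        exact EReal.top_sub_coe c
    rw [this, erealToNNE_top']
    exact le_trans le_top (by simp)
  obtain ⟨b, rfl⟩ : ∃ b : ℝ, y = ((b : ℝ) : EReal) := ⟨y.toReal, (EReal.coe_toReal hyt hyb).symm⟩
  rcases eq_or_ne x ⊤ with rfl | hxt
  · rw [show (⊤ : EReal) - (b : ℝ) = ⊤ from EReal.top_sub_coe b, erealToNNE_top']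
    exact le_trans le_top (by simp)
  rcases eq_or_ne z ⊥ with rfl | hzb
  · rw [show ((b : ℝ) : EReal) - ⊥ = ⊤ from EReal.sub_bot (by simp), erealToNNE_top']
    exact le_trans le_top (by simp)
  obtain ⟨a, rfl⟩ : ∃ a : ℝ, x = ((a : ℝ) : EReal) := ⟨x.toReal, (EReal.coe_toReal hxt hx).symm⟩
  obtain ⟨c, rfl⟩ : ∃ c : ℝ, z = ((c : ℝ) : EReal) := ⟨z.toReal, (EReal.coe_toReal hz hzb).symm⟩
  calc erealToNNE (((a : ℝ) : EReal) - ((c : ℝ) : EReal))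
      = erealToNNE ((((a - b : ℝ)) : EReal) + (((b - c : ℝ)) : EReal)) := by
        rw [← EReal.coe_add, ← EReal.coe_sub]
        norm_num
    _ ≤ erealToNNE (((a - b : ℝ) : EReal)) + erealToNNE (((b - c : ℝ) : EReal)) :=
        erealToNNE_add_le _ _
    _ = erealToNNE (((a : ℝ) : EReal) - ((b : ℝ) : EReal)) +
        erealToNNE (((b : ℝ) : EReal) - ((c : ℝ) : EReal)) := by
        rw [EReal.coe_sub, EReal.coe_sub]

end AuxErealToNNE

section AuxDK

lemma EReal.sub_self_le_zero (x : EReal) : x - x ≤ 0 := by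
  induction x using EReal.rec with
  | bot => rw [EReal.bot_sub]; exact bot_le
  | coe a => rw [← EReal.coe_sub]; norm_num
  | top => rw [EReal.sub_top]; exact bot_le

lemma LabelLE.refl' (k : SLabel Act) : LabelLE k k := ⟨rfl, le_rfl, le_rfl⟩

lemma LabelLE.trans' {k l m : SLabel Act} (h₁ : LabelLE k l) (h₂ : LabelLE l m) :
    LabelLE k m :=
  ⟨h₁.1.trans h₂.1, h₂.2.1.trans h₁.2.1, h₁.2.2.trans h₂.2.2⟩

lemma dK_eq_zero_of_le {k k' : SLabel Act} (h : LabelLE k k') : dK k k' = 0 := by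
  obtain ⟨ha, hlo, hhi⟩ := h
  rw [dK, if_pos ha]
  apply erealToNNE_nonpos
  refine max_le ?_ (max_le ?_ le_rfl)
  · exact le_trans (EReal.sub_le_sub hlo le_rfl) (EReal.sub_self_le_zero _)
  · exact le_trans (EReal.sub_le_sub hhi le_rfl) (EReal.sub_self_le_zero _)

lemma dK_ne_top_action {k l : SLabel Act} (h : dK k l ≠ ⊤) : k.1 = l.1 := by
  by_contra hne
  rw [dK, if_neg hne] at h
  exact h rfl

lemma dK_triangle (k₁ k₂ k₃ : SLabel Act) : dK k₁ k₃ ≤ dK k₁ k₂ + dK k₂ k₃ := by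
  by_cases h12 : k₁.1 = k₂.1
  · by_cases h23 : k₂.1 = k₃.1
    · rw [dK, if_pos (h12.trans h23)]
      have hA : ∀ x : EReal,
          x ≤ max (k₂.2.lo - k₁.2.lo) (max (k₁.2.hi - k₂.2.hi) 0) →
            erealToNNE x ≤ dK k₁ k₂ := by
        intro x hx
        rw [dK, if_pos h12]
        exact erealToNNE_mono hx
      have hB : ∀ x : EReal,
          x ≤ max (k₃.2.lo - k₂.2.lo) (max (k₂.2.hi - k₃.2.hi) 0) →
            erealToNNE x ≤ dK k₂ k₃ := by
        intro x hx
        rw [dK, if_pos h23]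
        exact erealToNNE_mono hx
      rw [erealToNNE_max', erealToNNE_max']
      refine max_le ?_ (max_le ?_ ?_)
      · refine le_trans (erealToNNE_sub_triangle k₃.2.lo k₂.2.lo k₁.2.lo) ?_
        rw [add_comm (dK k₁ k₂) (dK k₂ k₃)]
        exact add_le_add (hB _ (le_max_left _ _)) (hA _ (le_max_left _ _))
      · refine le_trans (erealToNNE_sub_triangle k₁.2.hi k₂.2.hi k₃.2.hi) ?_
        exact add_le_add (hA _ (le_trans (le_max_left _ _) (le_max_right _ _)))
          (hB _ (le_trans (le_max_left _ _) (le_max_right _ _)))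
      · rw [erealToNNE_nonpos le_rfl]
        exact zero_le
    · have h : dK k₂ k₃ = ⊤ := by rw [dK, if_neg h23]
      rw [h, add_top]
      exact le_top
  · have h : dK k₁ k₂ = ⊤ := by rw [dK, if_neg h12]
    rw [h, top_add]
    exact le_top

/-- Singleton (implementation) label. -/
noncomputable def single (a : Act) (n : ℤ) : SLabel Act :=
  (a, ⟨((n : ℝ) : EReal), ((n : ℝ) : EReal), Or.inr ⟨n, rfl⟩, Or.inr ⟨n, rfl⟩, le_rfl⟩)

lemma isImpLabel_single (a : Act) (n : ℤ) : IsImpLabel (single a n) := ⟨n, rfl, rfl⟩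

/-- Clamping: every interval contains an integer point whose distance to an
implementation label `k` is at most `dK k (k.1, I)`. -/
lemma exists_point (k : SLabel Act) (hk : IsImpLabel k) (I : EInterval) :
    ∃ m : ℤ, LabelLE (single k.1 m) (k.1, I) ∧
      dK k (single k.1 m) ≤ dK k (k.1, I) := by
  classical
  obtain ⟨n, hlo, hhi⟩ := hk
  have hdKs : ∀ m : ℤ, dK k (single k.1 m) =
      erealToNNE (max ((((m : ℝ) : EReal)) - ((n : ℝ) : EReal))
        (max ((((n : ℝ) : EReal)) - ((m : ℝ) : EReal)) 0)) := by
    intro m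
    simp only [dK, single, eq_self_iff_true, if_true, hlo, hhi]
  have hdKI : dK k (k.1, I) =
      erealToNNE (max (I.lo - ((n : ℝ) : EReal))
        (max ((((n : ℝ) : EReal)) - I.hi) 0)) := by
    simp only [dK, eq_self_iff_true, if_true, hlo, hhi]
  rcases lt_or_ge ((n : ℝ) : EReal) I.lo with hnlo | hrlo
  · -- n below the interval: clamp to lo
    rcases I.lo_mem with hbot | ⟨x, hx⟩
    · rw [hbot] at hnlo; exact absurd hnlo (by simp)
    have hnx : (n : ℝ) < (x : ℝ) := by
      rw [hx] at hnlo; exact_mod_cast hnlo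
    refine ⟨x, ⟨rfl, le_of_eq hx, ?_⟩, ?_⟩
    · show ((x : ℝ) : EReal) ≤ I.hi
      rw [← hx]; exact I.lo_le_hi
    · rw [hdKs, hdKI]
      apply erealToNNE_mono
      refine max_le ?_ (max_le ?_ ?_)
      · exact le_max_of_le_left (by rw [hx])
      · refine le_max_of_le_left ?_
        rw [hx, ← EReal.coe_sub, ← EReal.coe_sub, EReal.coe_le_coe_iff]
        linarith
      · refine le_max_of_le_left ?_
        rw [hx, ← EReal.coe_sub, show (0 : EReal) = ((0 : ℝ) : EReal) from rfl,
          EReal.coe_le_coe_iff]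
        linarith
  rcases lt_or_ge I.hi ((n : ℝ) : EReal) with hnhi | hrhi
  · -- n above the interval: clamp to hi
    rcases I.hi_mem with htop | ⟨y, hy⟩
    · rw [htop] at hnhi; exact absurd hnhi (by simp)
    have hny : (y : ℝ) < (n : ℝ) := by
      rw [hy] at hnhi; exact_mod_cast hnhi
    refine ⟨y, ⟨rfl, ?_, ?_⟩, ?_⟩
    · show I.lo ≤ ((y : ℝ) : EReal)
      rw [← hy]; exact I.lo_le_hi
    · show ((y : ℝ) : EReal) ≤ I.hi
      rw [hy]
    · rw [hdKs, hdKI]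
      apply erealToNNE_mono
      refine max_le ?_ (max_le ?_ ?_)
      · refine le_max_of_le_right (le_max_of_le_left ?_)
        rw [hy, ← EReal.coe_sub, ← EReal.coe_sub, EReal.coe_le_coe_iff]
        linarith
      · exact le_max_of_le_right (le_max_of_le_left (by rw [hy]))
      · refine le_max_of_le_right (le_max_of_le_left ?_)
        rw [hy, ← EReal.coe_sub, show (0 : EReal) = ((0 : ℝ) : EReal) from rfl,
          EReal.coe_le_coe_iff]
        linarith
  · -- n inside the interval
    refine ⟨n, ⟨rfl, hrlo, hrhi⟩, ?_⟩
    rw [hdKs]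
    rw [erealToNNE_nonpos (max_le (EReal.sub_self_le_zero _)
      (max_le (EReal.sub_self_le_zero _) le_rfl))]
    exact zero_le

end AuxDK

section AuxDM

lemma dm_fix (lam : ℝ≥0∞) (S₁ S₂ : WMTS Act) :
    dmF lam S₁ S₂ (dm lam S₁ S₂) = dm lam S₁ S₂ :=
  OrderHom.map_lfp _

lemma dm_may_le {lam : ℝ≥0∞} {S₁ S₂ : WMTS Act} {s₁ : S₁.State} {s₂ : S₂.State}
    {k₁ : SLabel Act} {t₁ : S₁.State} (h : S₁.may s₁ k₁ t₁) :
    (⨅ k₂, ⨅ t₂, ⨅ _ : S₂.may s₂ k₂ t₂, dK k₁ k₂ + lam * dm lam S₁ S₂ t₁ t₂) ≤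
      dm lam S₁ S₂ s₁ s₂ := by
  conv_rhs => rw [← dm_fix lam S₁ S₂]
  refine le_trans ?_ (le_max_left _ _)
  exact le_iSup_of_le k₁ (le_iSup_of_le t₁ (le_iSup_of_le h le_rfl))

lemma dm_must_le {lam : ℝ≥0∞} {S₁ S₂ : WMTS Act} {s₁ : S₁.State} {s₂ : S₂.State}
    {k₂ : SLabel Act} {t₂ : S₂.State} (h : S₂.must s₂ k₂ t₂) :
    (⨅ k₁, ⨅ t₁, ⨅ _ : S₁.must s₁ k₁ t₁, dK k₁ k₂ + lam * dm lam S₁ S₂ t₁ t₂) ≤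
      dm lam S₁ S₂ s₁ s₂ := by
  conv_rhs => rw [← dm_fix lam S₁ S₂]
  refine le_trans ?_ (le_max_right _ _)
  exact le_iSup_of_le k₂ (le_iSup_of_le t₂ (le_iSup_of_le h le_rfl))

lemma dm_eq_zero_of_refines {lam : ℝ≥0∞} {S₁ S₂ : WMTS Act} (h : Refines S₁ S₂) :
    dm lam S₁ S₂ S₁.init S₂.init = 0 := by
  classical
  obtain ⟨R, hinit, hR⟩ := h
  have hle : dm lam S₁ S₂ ≤ fun s₁ s₂ => if R s₁ s₂ then 0 else ⊤ := by
    apply OrderHom.lfp_le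
    intro s₁ s₂
    by_cases hr : R s₁ s₂
    · simp only [if_pos hr]
      apply max_le
      · apply iSup_le; intro k₁; apply iSup_le; intro t₁; apply iSup_le; intro hmay
        obtain ⟨k₂, t₂, hmay₂, hlab, hRt⟩ := (hR s₁ s₂ hr).1 k₁ t₁ hmay
        refine le_trans (iInf_le_of_le k₂ (iInf_le_of_le t₂ (iInf_le_of_le hmay₂ le_rfl))) ?_
        simp [dK_eq_zero_of_le hlab, hRt]
      · apply iSup_le; intro k₂; apply iSup_le; intro t₂; apply iSup_le; intro hmust
        obtain ⟨k₁, t₁, hmust₁, hlab, hRt⟩ := (hR s₁ s₂ hr).2 k₂ t₂ hmust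
        refine le_trans (iInf_le_of_le k₁ (iInf_le_of_le t₁ (iInf_le_of_le hmust₁ le_rfl))) ?_
        simp [dK_eq_zero_of_le hlab, hRt]
    · simp only [if_neg hr]
      exact le_top
  have := hle S₁.init S₂.init
  simp only [hinit, if_true] at this
  exact le_antisymm this (zero_le)

lemma dm_triangle (lam : ℝ≥0∞) (S₁ S₂ S₃ : WMTS Act)
    (s₁ : S₁.State) (s₂ : S₂.State) (s₃ : S₃.State) :
    dm lam S₁ S₃ s₁ s₃ ≤ dm lam S₁ S₂ s₁ s₂ + dm lam S₂ S₃ s₂ s₃ := by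
  classical
  set A := dm lam S₁ S₂ with hA
  set B := dm lam S₂ S₃ with hB
  have hle : dm lam S₁ S₃ ≤ fun u w => ⨅ v : S₂.State, A u v + B v w := by
    apply OrderHom.lfp_le
    intro u w
    refine le_iInf fun v => ?_
    rcases eq_or_ne (A u v + B v w) ⊤ with htop | hne
    · rw [htop]; exact le_top
    apply ENNReal.le_of_forall_pos_le_add
    intro ε hε _
    have hε2 : ((ε : ℝ≥0∞) / 2) ≠ 0 := by
      simp [ENNReal.div_eq_zero_iff, hε.ne']
    have hAne : A u v ≠ ⊤ := fun h => hne (by rw [h, top_add])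
    have hBne : B v w ≠ ⊤ := fun h => hne (by rw [h, add_top])
    apply max_le
    · apply iSup_le; intro k₁; apply iSup_le; intro t₁; apply iSup_le; intro h₁
      have h2 : (⨅ k₂, ⨅ t₂, ⨅ _ : S₂.may v k₂ t₂, dK k₁ k₂ + lam * A t₁ t₂) <
          A u v + (ε : ℝ≥0∞) / 2 :=
        lt_of_le_of_lt (dm_may_le h₁) (ENNReal.lt_add_right hAne hε2)
      simp only [iInf_lt_iff] at h2
      obtain ⟨k₂, t₂, h₂, hc₂⟩ := h2
      have h3 : (⨅ k₃, ⨅ t₃, ⨅ _ : S₃.may w k₃ t₃, dK k₂ k₃ + lam * B t₂ t₃) <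
          B v w + (ε : ℝ≥0∞) / 2 :=
        lt_of_le_of_lt (dm_may_le h₂) (ENNReal.lt_add_right hBne hε2)
      simp only [iInf_lt_iff] at h3
      obtain ⟨k₃, t₃, h₃, hc₃⟩ := h3
      refine le_trans (iInf_le_of_le k₃ (iInf_le_of_le t₃ (iInf_le_of_le h₃ le_rfl))) ?_
      calc dK k₁ k₃ + lam * ⨅ v', A t₁ v' + B v' t₃
          ≤ (dK k₁ k₂ + dK k₂ k₃) + lam * (A t₁ t₂ + B t₂ t₃) := by
            gcongr
            · exact dK_triangle k₁ k₂ k₃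
            · exact iInf_le _ t₂
        _ = (dK k₁ k₂ + lam * A t₁ t₂) + (dK k₂ k₃ + lam * B t₂ t₃) := by ring
        _ ≤ (A u v + (ε : ℝ≥0∞) / 2) + (B v w + (ε : ℝ≥0∞) / 2) :=
            add_le_add hc₂.le hc₃.le
        _ = A u v + B v w + (ε : ℝ≥0∞) := by
            rw [add_add_add_comm, ENNReal.add_halves]
    · apply iSup_le; intro k₃; apply iSup_le; intro t₃; apply iSup_le; intro h₃
      have h2 : (⨅ k₂, ⨅ t₂, ⨅ _ : S₂.must v k₂ t₂, dK k₂ k₃ + lam * B t₂ t₃) <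
          B v w + (ε : ℝ≥0∞) / 2 :=
        lt_of_le_of_lt (dm_must_le h₃) (ENNReal.lt_add_right hBne hε2)
      simp only [iInf_lt_iff] at h2
      obtain ⟨k₂, t₂, h₂, hc₂⟩ := h2
      have h3 : (⨅ k₁, ⨅ t₁, ⨅ _ : S₁.must u k₁ t₁, dK k₁ k₂ + lam * A t₁ t₂) <
          A u v + (ε : ℝ≥0∞) / 2 :=
        lt_of_le_of_lt (dm_must_le h₂) (ENNReal.lt_add_right hAne hε2)
      simp only [iInf_lt_iff] at h3
      obtain ⟨k₁, t₁, h₁, hc₁⟩ := h3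
      refine le_trans (iInf_le_of_le k₁ (iInf_le_of_le t₁ (iInf_le_of_le h₁ le_rfl))) ?_
      calc dK k₁ k₃ + lam * ⨅ v', A t₁ v' + B v' t₃
          ≤ (dK k₁ k₂ + dK k₂ k₃) + lam * (A t₁ t₂ + B t₂ t₃) := by
            gcongr
            · exact dK_triangle k₁ k₂ k₃
            · exact iInf_le _ t₂
        _ = (dK k₁ k₂ + lam * A t₁ t₂) + (dK k₂ k₃ + lam * B t₂ t₃) := by ring
        _ ≤ (A u v + (ε : ℝ≥0∞) / 2) + (B v w + (ε : ℝ≥0∞) / 2) :=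
            add_le_add hc₁.le hc₂.le
        _ = A u v + B v w + (ε : ℝ≥0∞) := by
            rw [add_add_add_comm, ENNReal.add_halves]
  refine le_trans (hle s₁ s₃) ?_
  exact iInf_le _ s₂

end AuxDM

section AuxApprox

variable (lam : ℝ≥0∞) (I₁ S₂ : WMTS Act) (δ : ℝ≥0∞)

/-- Transition relation of the ε-close implementation of `S₂` built from an
implementation `I₁`. -/
def approxT (p : I₁.State × S₂.State) (ℓ : SLabel Act)
    (q : I₁.State × S₂.State) : Prop :=
  (∃ k₁ k₂, I₁.must p.1 k₁ q.1 ∧ S₂.may p.2 k₂ q.2 ∧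
      dK k₁ k₂ + lam * dm lam I₁ S₂ q.1 q.2 < dm lam I₁ S₂ p.1 p.2 + δ ∧
      LabelLE ℓ k₂ ∧ IsImpLabel ℓ ∧ dK k₁ ℓ ≤ dK k₁ k₂) ∨
  (∃ k₂, S₂.must p.2 k₂ q.2 ∧ LabelLE ℓ k₂ ∧ IsImpLabel ℓ ∧
      ((∃ k₁, I₁.must p.1 k₁ q.1 ∧
          dK k₁ k₂ + lam * dm lam I₁ S₂ q.1 q.2 < dm lam I₁ S₂ p.1 p.2 + δ ∧
          dK k₁ ℓ ≤ dK k₁ k₂) ∨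
        (q.1 = p.1 ∧ ∀ k₁ j, I₁.must p.1 k₁ j →
          ¬ (dK k₁ k₂ + lam * dm lam I₁ S₂ j q.2 < dm lam I₁ S₂ p.1 p.2 + δ)))) 

/-- The ε-close implementation of `S₂` built from an implementation `I₁`. -/
noncomputable def approxImpl : WMTS Act where
  State := I₁.State × S₂.State
  init := (I₁.init, S₂.init)
  may := approxT lam I₁ S₂ δ
  must := approxT lam I₁ S₂ δ
  must_may := fun _ k _ h => ⟨k, LabelLE.refl' k, h⟩

lemma approxT_impLabel {p ℓ q} (h : approxT lam I₁ S₂ δ p ℓ q) : IsImpLabel ℓ := by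
  rcases h with ⟨_, _, _, _, _, _, himp, _⟩ | ⟨_, _, _, himp, _⟩ <;> exact himp

/-- Every must-transition of `S₂` is matched by a transition of `approxT`. -/
lemma approxT_of_must (hI : I₁.IsImplementation)
    {p : I₁.State × S₂.State} {k₂ : SLabel Act} {t : S₂.State}
    (hmust : S₂.must p.2 k₂ t) :
    ∃ ℓ q, approxT lam I₁ S₂ δ p ℓ q ∧ LabelLE ℓ k₂ ∧ q.2 = t := by
  classical
  by_cases hgood : ∃ k₁ j, I₁.must p.1 k₁ j ∧
      dK k₁ k₂ + lam * dm lam I₁ S₂ j t < dm lam I₁ S₂ p.1 p.2 + δ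
  · obtain ⟨k₁, j, hm, hcost⟩ := hgood
    have hdkne : dK k₁ k₂ ≠ ⊤ :=
      (lt_of_le_of_lt le_self_add (lt_of_lt_of_le hcost le_top)).ne
    have ha : k₁.1 = k₂.1 := dK_ne_top_action hdkne
    obtain ⟨m, hle, hdk⟩ := exists_point k₁ (hI.2 _ _ _ hm) k₂.2
    rw [ha] at hle hdk
    exact ⟨single k₂.1 m, (j, t),
      Or.inr ⟨k₂, hmust, hle, isImpLabel_single _ _, Or.inl ⟨k₁, hm, hcost, hdk⟩⟩,
      hle, rfl⟩
  · obtain ⟨m, hle, -⟩ := exists_point (single k₂.1 0) (isImpLabel_single _ _) k₂.2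
    exact ⟨single k₂.1 m, (p.1, t),
      Or.inr ⟨k₂, hmust, hle, isImpLabel_single _ _,
        Or.inr ⟨rfl, fun k₁ j hm hc => hgood ⟨k₁, j, hm, hc⟩⟩⟩,
      hle, rfl⟩

lemma approxImpl_mem_Impl (hI : I₁.IsImplementation) :
    approxImpl lam I₁ S₂ δ ∈ Impl S₂ := by
  refine ⟨⟨fun _ _ _ => Iff.rfl, fun _ k _ h => approxT_impLabel lam I₁ S₂ δ h⟩, ?_⟩
  refine ⟨fun q s => q.2 = s, rfl, ?_⟩
  rintro q s rfl
  constructor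
  · rintro ℓ q' hT
    rcases hT with ⟨k₁, k₂, hm1, hmay2, hcost, hle, himp, hdk⟩ | ⟨k₂, hmust2, hle, himp, _⟩
    · exact ⟨k₂, q'.2, hmay2, hle, rfl⟩
    · obtain ⟨ℓ₂, hk₂ℓ₂, hmay⟩ := S₂.must_may _ _ _ hmust2
      exact ⟨ℓ₂, q'.2, hmay, LabelLE.trans' hle hk₂ℓ₂, rfl⟩
  · rintro k₂ t₂ hmust
    obtain ⟨ℓ, q', hT, hle, hq⟩ := approxT_of_must lam I₁ S₂ δ hI hmust
    exact ⟨ℓ, q', hT, hle, hq⟩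

/-- The approximating implementation is close to `I₁`. -/
lemma approxImpl_close (hlam1 : lam < 1) (hI : I₁.IsImplementation)
    (ε : NNReal) (hε : 0 < ε) (hδ : δ = (1 - lam) * (ε : ℝ≥0∞)) :
    diInit lam I₁ (approxImpl lam I₁ S₂ δ) ≤
      dm lam I₁ S₂ I₁.init S₂.init + (ε : ℝ≥0∞) := by
  classical
  have hδ0 : δ ≠ 0 := by
    rw [hδ]
    refine mul_ne_zero ?_ (by exact_mod_cast hε.ne')
    exact (tsub_pos_iff_lt.mpr hlam1).ne'
  have hδε : δ + lam * (ε : ℝ≥0∞) = (ε : ℝ≥0∞) := by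
    rw [hδ, ← add_mul, tsub_add_cancel_of_le hlam1.le, one_mul]
  set D := dm lam I₁ S₂ with hD
  have hdi : di lam I₁ (approxImpl lam I₁ S₂ δ) ≤
      fun i q => if i = q.1 then D q.1 q.2 + (ε : ℝ≥0∞) else ⊤ := by
    apply OrderHom.lfp_le
    intro i q
    simp only []
    by_cases hi : i = q.1
    · subst hi
      rw [if_pos rfl]
      rcases eq_or_ne (D q.1 q.2) ⊤ with htop | hDne
      · rw [htop, top_add]; exact le_top
      apply max_le
      · -- transitions of I₁ matched in approxImpl
        apply iSup_le; intro k₁; apply iSup_le; intro j₁; apply iSup_le; intro hmust1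
        have hmay1 : I₁.may q.1 k₁ j₁ := (hI.1 _ _ _).mpr hmust1
        have h2 : (⨅ k₂, ⨅ t₂, ⨅ _ : S₂.may q.2 k₂ t₂, dK k₁ k₂ + lam * D j₁ t₂) <
            D q.1 q.2 + δ :=
          lt_of_le_of_lt (dm_may_le hmay1) (ENNReal.lt_add_right hDne hδ0)
        simp only [iInf_lt_iff] at h2
        obtain ⟨k₂, t₂, hmay2, hcost⟩ := h2
        have hdkne : dK k₁ k₂ ≠ ⊤ :=
          (lt_of_le_of_lt le_self_add (lt_of_lt_of_le hcost le_top)).ne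
        have ha : k₁.1 = k₂.1 := dK_ne_top_action hdkne
        obtain ⟨m, hle, hdk⟩ := exists_point k₁ (hI.2 _ _ _ hmust1) k₂.2
        rw [ha] at hle hdk
        have hT : approxT lam I₁ S₂ δ q (single k₂.1 m) (j₁, t₂) :=
          Or.inl ⟨k₁, k₂, hmust1, hmay2, hcost, hle, isImpLabel_single _ _, hdk⟩
        refine le_trans (iInf_le_of_le (single k₂.1 m)
          (iInf_le_of_le (j₁, t₂) (iInf_le_of_le hT le_rfl))) ?_
        have hred : ((fun (i : I₁.State) (q : I₁.State × S₂.State) =>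
            if i = q.1 then D q.1 q.2 + (ε : ℝ≥0∞) else ⊤) j₁ (j₁, t₂)) =
            D j₁ t₂ + (ε : ℝ≥0∞) := by simp
        rw [hred]
        calc dK k₁ (single k₂.1 m) + lam * (D j₁ t₂ + (ε : ℝ≥0∞))
            = (dK k₁ (single k₂.1 m) + lam * D j₁ t₂) + lam * (ε : ℝ≥0∞) := by ring
          _ ≤ (dK k₁ k₂ + lam * D j₁ t₂) + lam * (ε : ℝ≥0∞) := by gcongr
          _ ≤ (D q.1 q.2 + δ) + lam * (ε : ℝ≥0∞) := add_le_add hcost.le le_rfl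
          _ = D q.1 q.2 + (ε : ℝ≥0∞) := by rw [add_assoc, hδε]
      · -- transitions of approxImpl matched in I₁
        apply iSup_le; intro ℓ; apply iSup_le; intro q'; apply iSup_le; intro hT
        have main : ∀ k₁ k₂ : SLabel Act, I₁.must q.1 k₁ q'.1 →
            dK k₁ k₂ + lam * D q'.1 q'.2 < D q.1 q.2 + δ → dK k₁ ℓ ≤ dK k₁ k₂ →
            (⨅ k₁', ⨅ j₁, ⨅ _ : I₁.must q.1 k₁' j₁,
              dK k₁' ℓ + lam * (if j₁ = q'.1 then D q'.1 q'.2 + (ε : ℝ≥0∞) else ⊤)) ≤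
              D q.1 q.2 + (ε : ℝ≥0∞) := by
          intro k₁ k₂ hm1 hcost hdk
          refine le_trans (iInf_le_of_le k₁
            (iInf_le_of_le q'.1 (iInf_le_of_le hm1 le_rfl))) ?_
          rw [if_pos rfl]
          calc dK k₁ ℓ + lam * (D q'.1 q'.2 + (ε : ℝ≥0∞))
              = (dK k₁ ℓ + lam * D q'.1 q'.2) + lam * (ε : ℝ≥0∞) := by ring
            _ ≤ (dK k₁ k₂ + lam * D q'.1 q'.2) + lam * (ε : ℝ≥0∞) := by gcongr
            _ ≤ (D q.1 q.2 + δ) + lam * (ε : ℝ≥0∞) := add_le_add hcost.le le_rfl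
            _ = D q.1 q.2 + (ε : ℝ≥0∞) := by rw [add_assoc, hδε]
        have hmain : (⨅ k₁', ⨅ j₁, ⨅ _ : I₁.must q.1 k₁' j₁,
            dK k₁' ℓ + lam * (fun (i : I₁.State) (q : I₁.State × S₂.State) =>
              if i = q.1 then D q.1 q.2 + (ε : ℝ≥0∞) else ⊤) j₁ q') =
            (⨅ k₁', ⨅ j₁, ⨅ _ : I₁.must q.1 k₁' j₁,
              dK k₁' ℓ + lam * (if j₁ = q'.1 then D q'.1 q'.2 + (ε : ℝ≥0∞) else ⊤)) :=
          rfl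
        rcases hT with ⟨k₁, k₂, hm1, hmay2, hcost, hle, himp, hdk⟩ |
          ⟨k₂, hmust2, hle, himp, hrest⟩
        · exact main k₁ k₂ hm1 hcost hdk
        · rcases hrest with ⟨k₁, hm1, hcost, hdk⟩ | ⟨hq, hnone⟩
          · exact main k₁ k₂ hm1 hcost hdk
          · exfalso
            have h2 : (⨅ k₁, ⨅ t₁, ⨅ _ : I₁.must q.1 k₁ t₁,
                dK k₁ k₂ + lam * D t₁ q'.2) < D q.1 q.2 + δ :=
              lt_of_le_of_lt (dm_must_le hmust2) (ENNReal.lt_add_right hDne hδ0)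
            simp only [iInf_lt_iff] at h2
            obtain ⟨k₁', j', hm', hc'⟩ := h2
            exact hnone k₁' j' hm' hc'
    · rw [if_neg hi]
      exact le_top
  have h := hdi I₁.init (I₁.init, S₂.init)
  have h2 : ((fun (i : I₁.State) (q : I₁.State × S₂.State) =>
      if i = q.1 then D q.1 q.2 + (ε : ℝ≥0∞) else ⊤) I₁.init (I₁.init, S₂.init)) =
      D I₁.init S₂.init + (ε : ℝ≥0∞) := by simp
  exact le_trans h (le_of_eq h2)

end AuxApprox

/-- the thorough refinement distance is bounded above by the
modal refinement distance. -/
theorem dt_le_dm {Act : Type} (lam : ℝ≥0∞) (hlam0 : 0 < lam)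
    (hlam1 : lam < 1) (S₁ S₂ : WMTS Act)
    (hc₁ : CompactlyBranching lam S₁) (hc₂ : CompactlyBranching lam S₂) :
    dt lam S₁ S₂ ≤ dmInit lam S₁ S₂ := by
  rw [dt]
  apply iSup_le; intro I₁; apply iSup_le; intro hI₁
  obtain ⟨hImp, hRef⟩ := hI₁
  apply ENNReal.le_of_forall_pos_le_add
  intro ε hε _
  set δ : ℝ≥0∞ := (1 - lam) * (ε : ℝ≥0∞) with hδ
  calc (⨅ I₂ ∈ Impl S₂, diInit lam I₁ I₂)
      ≤ diInit lam I₁ (approxImpl lam I₁ S₂ δ) :=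
        iInf₂_le _ (approxImpl_mem_Impl lam I₁ S₂ δ hImp)
    _ ≤ dm lam I₁ S₂ I₁.init S₂.init + (ε : ℝ≥0∞) :=
        approxImpl_close lam I₁ S₂ δ hlam1 hImp ε hε hδ
    _ ≤ (dm lam I₁ S₁ I₁.init S₁.init + dm lam S₁ S₂ S₁.init S₂.init) + (ε : ℝ≥0∞) := by
        gcongr
        exact dm_triangle lam I₁ S₁ S₂ I₁.init S₁.init S₂.init
    _ = dmInit lam S₁ S₂ + (ε : ℝ≥0∞) := by
        rw [dm_eq_zero_of_refines hRef, zero_add]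
        rfl

end WMTSQuant
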